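/- Let t ∈ [π + 1, 5], ψ = arcsin(1/t), and let q ∈ [0, ψ + π/2) satisfy (t + 1)/(t + g_ψ(q)) ≥ x(t), where g_ψ(s) = e^{s·tan ψ}·cos ψ / cos(ψ − s), x(t) = 1 − (u(t) − 1)/t, u(t) = f⁻¹(t − 1 − π/2), and f(s) = √(s² − 1) + arcsin(1/s). Then 0.76 < x(t) ≤ (t + 1)/(t + g_ψ(q)) ≤ 1 and 0 ≤ q < 1.32. -/

import Mathlib

noncomputable section

open Real

/-- `f(s) = √(s² − 1) + arcsin(1/s)`. -/
def fDS (s : ℝ) : ℝ := Real.sqrt (s ^ 2 - 1) + Real.arcsin (1 / s)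

/-- The inverse of `f` on `[1, ∞)`. -/
def fDSInv : ℝ → ℝ := Function.invFunOn fDS (Set.Ici 1)

/-- `u(t) = f⁻¹(t − 1 − π/2)`. -/
def uFun (t : ℝ) : ℝ := fDSInv (t - 1 - π / 2)

/-- `x(t) = 1 − (u(t) − 1)/t`. -/
def xFun (t : ℝ) : ℝ := 1 - (uFun t - 1) / t

/-- `g_ψ(s) = e^{s·tan ψ}·cos ψ / cos(ψ − s)`. -/
def gFun (ψ s : ℝ) : ℝ := Real.exp (s * Real.tan ψ) * Real.cos ψ / Real.cos (ψ - s)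

lemma sin_poly {x : ℝ} (h0 : 0 ≤ x) (h1 : x ≤ 1) :
    x - x ^ 3 / 6 - x ^ 4 * (5 / 96) ≤ Real.sin x ∧
      Real.sin x ≤ x - x ^ 3 / 6 + x ^ 4 * (5 / 96) := by
  have h := Real.sin_bound (x := x) (by rwa [abs_of_nonneg h0])
  rw [abs_of_nonneg h0] at h
  have h2 := abs_le.1 h
  constructor <;> linarith [h2.1, h2.2, mul_le_mul_of_nonneg_left h1 (pow_nonneg h0 4), pow_nonneg h0 4]

lemma sin3_mono {x l u : ℝ} (h0 : 0 ≤ l) (hl : l ≤ Real.sin x) (hu : Real.sin x ≤ u) :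
    3 * l - 4 * u ^ 3 ≤ Real.sin (3 * x) ∧ Real.sin (3 * x) ≤ 3 * u - 4 * l ^ 3 := by
  rw [Real.sin_three_mul]
  have h1 : l ^ 3 ≤ Real.sin x ^ 3 := pow_le_pow_left₀ h0 hl 3
  have h2 : Real.sin x ^ 3 ≤ u ^ 3 := pow_le_pow_left₀ (h0.trans hl) hu 3
  constructor <;> nlinarith

lemma arcsin_ge {x y : ℝ} (hy0 : 0 ≤ y) (hy : y ≤ 1.55) (h : Real.sin y ≤ x) :
    y ≤ Real.arcsin x := by
  have hπ := Real.pi_gt_d6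
  have hy2 : y ≤ π / 2 := by linarith
  calc y = Real.arcsin (Real.sin y) := (Real.arcsin_sin (by linarith) hy2).symm
    _ ≤ Real.arcsin x := Real.monotone_arcsin h

lemma arcsin_le' {x y : ℝ} (hy0 : 0 ≤ y) (hy : y ≤ 1.55) (h : x ≤ Real.sin y) :
    Real.arcsin x ≤ y := by
  have hπ := Real.pi_gt_d6
  have hy2 : y ≤ π / 2 := by linarith
  calc Real.arcsin x ≤ Real.arcsin (Real.sin y) := Real.monotone_arcsin h
    _ = y := Real.arcsin_sin (by linarith) hy2

lemma sqrt_ge {a r : ℝ} (h0 : 0 ≤ r) (h : r ^ 2 ≤ a) : r ≤ Real.sqrt a := by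
  have h1 := Real.sqrt_le_sqrt h
  rwa [Real.sqrt_sq h0] at h1

lemma sin132_ub : Real.sin 1.32 ≤ 0.96913 := by
  have b0 := sin_poly (x := (11:ℝ)/75) (by norm_num) (by norm_num)
  have l0 : ((1461167:ℝ)/10000000 : ℝ) ≤ Real.sin ((11:ℝ)/75) := le_trans (by norm_num) b0.1
  have u0 : Real.sin ((11:ℝ)/75) ≤ (29233:ℝ)/200000 := le_trans b0.2 (by norm_num)
  have b1 := sin3_mono (x := (11:ℝ)/75) (by norm_num) l0 u0
  have e1 : (3:ℝ) * ((11:ℝ)/75) = (11:ℝ)/25 := by norm_num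
  rw [e1] at b1
  have l1 : ((4258593:ℝ)/10000000 : ℝ) ≤ Real.sin ((11:ℝ)/25) := le_trans (by norm_num) b1.1
  have u1 : Real.sin ((11:ℝ)/25) ≤ (2130083:ℝ)/5000000 := le_trans b1.2 (by norm_num)
  have b2 := sin3_mono (x := (11:ℝ)/25) (by norm_num) l1 u1
  have e2 : (3:ℝ) * ((11:ℝ)/25) = (1.32:ℝ) := by norm_num
  rw [e2] at b2
  have l2 : ((4841533:ℝ)/5000000 : ℝ) ≤ Real.sin ((1.32:ℝ)) := le_trans (by norm_num) b2.1
  have u2 : Real.sin ((1.32:ℝ)) ≤ (969121:ℝ)/1000000 := le_trans b2.2 (by norm_num)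
  exact le_trans u2 (by norm_num)

lemma cos132_ub : Real.cos 1.32 ≤ 0.24822 := by
  have b0 := sin_poly (x := (11:ℝ)/150) (by norm_num) (by norm_num)
  have l0 : ((36633:ℝ)/500000 : ℝ) ≤ Real.sin ((11:ℝ)/150) := le_trans (by norm_num) b0.1
  have u0 : Real.sin ((11:ℝ)/150) ≤ (183173:ℝ)/2500000 := le_trans b0.2 (by norm_num)
  have b1 := sin3_mono (x := (11:ℝ)/150) (by norm_num) l0 u0
  have e1 : (3:ℝ) * ((11:ℝ)/150) = (11:ℝ)/50 := by norm_num
  rw [e1] at b1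
  have l1 : ((1091123:ℝ)/5000000 : ℝ) ≤ Real.sin ((11:ℝ)/50) := le_trans (by norm_num) b1.1
  have u1 : Real.sin ((11:ℝ)/50) ≤ (436469:ℝ)/2000000 := le_trans b1.2 (by norm_num)
  have b2 := sin3_mono (x := (11:ℝ)/50) (by norm_num) l1 u1
  have e2 : (3:ℝ) * ((11:ℝ)/50) = (0.66:ℝ) := by norm_num
  rw [e2] at b2
  have l2 : ((6130989:ℝ)/10000000 : ℝ) ≤ Real.sin ((0.66:ℝ)) := le_trans (by norm_num) b2.1
  have u2 : Real.sin ((0.66:ℝ)) ≤ (383209:ℝ)/625000 := le_trans b2.2 (by norm_num)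
  have e : (1.32:ℝ) = 2 * 0.66 := by norm_num
  have hid : Real.cos (2 * 0.66) = 1 - 2 * Real.sin 0.66 ^ 2 := by
    rw [Real.cos_two_mul, Real.cos_sq']; ring
  rw [e, hid]
  nlinarith [l2, u2]

lemma sinnum0 : Real.sin ((5143:ℝ)/10000) ≤ (125:ℝ)/254 := by
  have b0 := sin_poly (x := (5143:ℝ)/30000) (by norm_num) (by norm_num)
  have l0 : ((852743:ℝ)/5000000 : ℝ) ≤ Real.sin ((5143:ℝ)/30000) := le_trans (by norm_num) b0.1
  have u0 : Real.sin ((5143:ℝ)/30000) ≤ (1706387:ℝ)/10000000 := le_trans b0.2 (by norm_num)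
  have b1 := sin3_mono (x := (5143:ℝ)/30000) (by norm_num) l0 u0
  have e1 : (3:ℝ) * ((5143:ℝ)/30000) = ((5143:ℝ)/10000:ℝ) := by norm_num
  rw [e1] at b1
  have l1 : ((2458857:ℝ)/5000000 : ℝ) ≤ Real.sin (((5143:ℝ)/10000:ℝ)) := le_trans (by norm_num) b1.1
  have u1 : Real.sin (((5143:ℝ)/10000:ℝ)) ≤ (4920733:ℝ)/10000000 := le_trans b1.2 (by norm_num)
  exact le_trans u1 (by norm_num)

lemma sinnum1 : Real.sin ((489:ℝ)/1000) ≤ (125:ℝ)/266 := by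
  have b0 := sin_poly (x := (163:ℝ)/1000) (by norm_num) (by norm_num)
  have l0 : ((811207:ℝ)/5000000 : ℝ) ≤ Real.sin ((163:ℝ)/1000) := le_trans (by norm_num) b0.1
  have u0 : Real.sin ((163:ℝ)/1000) ≤ (32463:ℝ)/200000 := le_trans b0.2 (by norm_num)
  have b1 := sin3_mono (x := (163:ℝ)/1000) (by norm_num) l0 u0
  have e1 : (3:ℝ) * ((163:ℝ)/1000) = ((489:ℝ)/1000:ℝ) := by norm_num
  rw [e1] at b1
  have l1 : ((2348093:ℝ)/5000000 : ℝ) ≤ Real.sin (((489:ℝ)/1000:ℝ)) := le_trans (by norm_num) b1.1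
  have u1 : Real.sin (((489:ℝ)/1000:ℝ)) ≤ (1174657:ℝ)/2500000 := le_trans b1.2 (by norm_num)
  exact le_trans u1 (by norm_num)

lemma sinnum2 : Real.sin ((4773:ℝ)/10000) ≤ (125:ℝ)/272 := by
  have b0 := sin_poly (x := (1591:ℝ)/10000) (by norm_num) (by norm_num)
  have l0 : ((791977:ℝ)/5000000 : ℝ) ≤ Real.sin ((1591:ℝ)/10000) := le_trans (by norm_num) b0.1
  have u0 : Real.sin ((1591:ℝ)/10000) ≤ (792311:ℝ)/5000000 := le_trans b0.2 (by norm_num)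
  have b1 := sin3_mono (x := (1591:ℝ)/10000) (by norm_num) l0 u0
  have e1 : (3:ℝ) * ((1591:ℝ)/10000) = ((4773:ℝ)/10000:ℝ) := by norm_num
  rw [e1] at b1
  have l1 : ((45927:ℝ)/100000 : ℝ) ≤ Real.sin (((4773:ℝ)/10000:ℝ)) := le_trans (by norm_num) b1.1
  have u1 : Real.sin (((4773:ℝ)/10000:ℝ)) ≤ (4594907:ℝ)/10000000 := le_trans b1.2 (by norm_num)
  exact le_trans u1 (by norm_num)

lemma sinnum3 : Real.sin ((2367:ℝ)/5000) ≤ (1250:ℝ)/2741 := by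
  have b0 := sin_poly (x := (789:ℝ)/5000) (by norm_num) (by norm_num)
  have l0 : ((196391:ℝ)/1250000 : ℝ) ≤ Real.sin ((789:ℝ)/5000) := le_trans (by norm_num) b0.1
  have u0 : Real.sin ((789:ℝ)/5000) ≤ (62871:ℝ)/400000 := le_trans b0.2 (by norm_num)
  have b1 := sin3_mono (x := (789:ℝ)/5000) (by norm_num) l0 u0
  have e1 : (3:ℝ) * ((789:ℝ)/5000) = ((2367:ℝ)/5000:ℝ) := by norm_num
  rw [e1] at b1
  have l1 : ((2279031:ℝ)/5000000 : ℝ) ≤ Real.sin (((2367:ℝ)/5000:ℝ)) := le_trans (by norm_num) b1.1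
  have u1 : Real.sin (((2367:ℝ)/5000:ℝ)) ≤ (1140049:ℝ)/2500000 := le_trans b1.2 (by norm_num)
  exact le_trans u1 (by norm_num)

lemma sinnum4 : Real.sin ((4723:ℝ)/10000) ≤ (1250:ℝ)/2747 := by
  have b0 := sin_poly (x := (4723:ℝ)/30000) (by norm_num) (by norm_num)
  have l0 : ((1567509:ℝ)/10000000 : ℝ) ≤ Real.sin ((4723:ℝ)/30000) := le_trans (by norm_num) b0.1
  have u0 : Real.sin ((4723:ℝ)/30000) ≤ (31363:ℝ)/200000 := le_trans b0.2 (by norm_num)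
  have b1 := sin3_mono (x := (4723:ℝ)/30000) (by norm_num) l0 u0
  have e1 : (3:ℝ) * ((4723:ℝ)/30000) = ((4723:ℝ)/10000:ℝ) := by norm_num
  rw [e1] at b1
  have l1 : ((4548277:ℝ)/10000000 : ℝ) ≤ Real.sin (((4723:ℝ)/10000:ℝ)) := le_trans (by norm_num) b1.1
  have u1 : Real.sin (((4723:ℝ)/10000:ℝ)) ≤ (455039:ℝ)/1000000 := le_trans b1.2 (by norm_num)
  exact le_trans u1 (by norm_num)

lemma sinnum5 : Real.sin ((4719:ℝ)/10000) ≤ (12500:ℝ)/27491 := by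
  have b0 := sin_poly (x := (1573:ℝ)/10000) (by norm_num) (by norm_num)
  have l0 : ((783097:ℝ)/5000000 : ℝ) ≤ Real.sin ((1573:ℝ)/10000) := le_trans (by norm_num) b0.1
  have u0 : Real.sin ((1573:ℝ)/10000) ≤ (1566833:ℝ)/10000000 := le_trans b0.2 (by norm_num)
  have b1 := sin3_mono (x := (1573:ℝ)/10000) (by norm_num) l0 u0
  have e1 : (3:ℝ) * ((1573:ℝ)/10000) = ((4719:ℝ)/10000:ℝ) := by norm_num
  rw [e1] at b1
  have l1 : ((4544721:ℝ)/10000000 : ℝ) ≤ Real.sin (((4719:ℝ)/10000:ℝ)) := le_trans (by norm_num) b1.1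
  have u1 : Real.sin (((4719:ℝ)/10000:ℝ)) ≤ (4546827:ℝ)/10000000 := le_trans b1.2 (by norm_num)
  exact le_trans u1 (by norm_num)

lemma sinnum6 : Real.sin ((4717:ℝ)/10000) ≤ (5:ℝ)/11 := by
  have b0 := sin_poly (x := (4717:ℝ)/30000) (by norm_num) (by norm_num)
  have l0 : ((48923:ℝ)/312500 : ℝ) ≤ Real.sin ((4717:ℝ)/30000) := le_trans (by norm_num) b0.1
  have u0 : Real.sin ((4717:ℝ)/30000) ≤ (783087:ℝ)/5000000 := le_trans b0.2 (by norm_num)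
  have b1 := sin3_mono (x := (4717:ℝ)/30000) (by norm_num) l0 u0
  have e1 : (3:ℝ) * ((4717:ℝ)/30000) = ((4717:ℝ)/10000:ℝ) := by norm_num
  rw [e1] at b1
  have l1 : ((4542941:ℝ)/10000000 : ℝ) ≤ Real.sin (((4717:ℝ)/10000:ℝ)) := le_trans (by norm_num) b1.1
  have u1 : Real.sin (((4717:ℝ)/10000:ℝ)) ≤ (4545043:ℝ)/10000000 := le_trans b1.2 (by norm_num)
  exact le_trans u1 (by norm_num)

lemma fDS_hasDerivAt {x : ℝ} (hx : 1 < x) :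
    HasDerivAt fDS
      (1 / (2 * Real.sqrt (x ^ 2 - 1)) * (2 * x) +
        1 / Real.sqrt (1 - (x⁻¹) ^ 2) * (-(x ^ 2)⁻¹)) x := by
  have hx0 : (0 : ℝ) < x := by linarith
  have h1 : HasDerivAt (fun s : ℝ => s ^ 2 - 1) (2 * x) x := by
    simpa using (hasDerivAt_pow 2 x).sub_const 1
  have h2 : HasDerivAt (fun s : ℝ => Real.sqrt (s ^ 2 - 1))
      (1 / (2 * Real.sqrt (x ^ 2 - 1)) * (2 * x)) x := by
    have := (Real.hasDerivAt_sqrt (by nlinarith : x ^ 2 - 1 ≠ 0)).comp x h1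
    simpa [Function.comp_def] using this
  have h3 : HasDerivAt (fun s : ℝ => s⁻¹) (-(x ^ 2)⁻¹) x := hasDerivAt_inv (by positivity)
  have h4 : HasDerivAt (fun s : ℝ => Real.arcsin s⁻¹)
      (1 / Real.sqrt (1 - (x⁻¹) ^ 2) * (-(x ^ 2)⁻¹)) x := by
    have hne1 : (x⁻¹ : ℝ) ≠ 1 := (inv_lt_one_of_one_lt₀ hx).ne
    have hnem1 : (x⁻¹ : ℝ) ≠ -1 := by
      have : (0:ℝ) < x⁻¹ := by positivity
      linarith
    have := (Real.hasDerivAt_arcsin hnem1 hne1).comp x h3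
    simpa [Function.comp_def] using this
  have h5 := h2.add h4
  have hfd : fDS = (fun s : ℝ => Real.sqrt (s ^ 2 - 1) + Real.arcsin s⁻¹) := by
    funext s; simp only [fDS, one_div]
  rw [hfd]
  exact h5

lemma fDS_deriv_pos {x : ℝ} (hx : 1 < x) :
    0 < 1 / (2 * Real.sqrt (x ^ 2 - 1)) * (2 * x) +
        1 / Real.sqrt (1 - (x⁻¹) ^ 2) * (-(x ^ 2)⁻¹) := by
  have hx0 : (0 : ℝ) < x := by linarith
  set w := Real.sqrt (x ^ 2 - 1) with hw
  have hwpos : 0 < w := Real.sqrt_pos.2 (by nlinarith)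
  have hw2 : w ^ 2 = x ^ 2 - 1 := Real.sq_sqrt (by nlinarith)
  have hrw : Real.sqrt (1 - (x⁻¹) ^ 2) = w / x := by
    rw [show 1 - (x⁻¹) ^ 2 = (w / x) ^ 2 by field_simp [hw2]; linarith]
    exact Real.sqrt_sq (by positivity)
  rw [hrw]
  have hkey : (1 / (2 * w) * (2 * x) + 1 / (w / x) * (-(x ^ 2)⁻¹)) * (w * x) = x ^ 2 - 1 := by
    field_simp
    ring
  nlinarith [mul_pos hwpos hx0]

lemma fDS_contOn : ContinuousOn fDS (Set.Ici 1) := by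
  unfold fDS
  apply ContinuousOn.add
  · exact (Real.continuous_sqrt.comp (by continuity)).continuousOn
  · apply Real.continuous_arcsin.comp_continuousOn
    apply ContinuousOn.div continuousOn_const continuousOn_id
    intro x hx
    have h1 : (1:ℝ) ≤ x := hx
    simp only [id_eq]
    exact ne_of_gt (by linarith)

lemma fDS_mono : StrictMonoOn fDS (Set.Ici 1) := by
  apply strictMonoOn_of_deriv_pos (convex_Ici 1) fDS_contOn
  intro x hx
  rw [interior_Ici] at hx
  rw [(fDS_hasDerivAt hx).deriv]
  exact fDS_deriv_pos hx

lemma fds_lb {t r y x2 : ℝ} (hr0 : 0 ≤ r) (hr : r ^ 2 ≤ (1 + 0.24 * t) ^ 2 - 1)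
    (hx2 : x2 ≤ 1 / (1 + 0.24 * t)) (hy : y ≤ Real.arcsin x2) :
    r + y ≤ fDS (1 + 0.24 * t) := by
  unfold fDS
  have h1 : r ≤ Real.sqrt ((1 + 0.24 * t) ^ 2 - 1) := sqrt_ge hr0 hr
  have h2 : y ≤ Real.arcsin (1 / (1 + 0.24 * t)) :=
    le_trans hy (Real.monotone_arcsin hx2)
  linarith

lemma polyIneq {s c : ℝ} (hs1 : 0.2 ≤ s) (hs2 : s ≤ 0.2415) (hc2 : c ^ 2 = 1 - s ^ 2)
    (hc0 : 0 < c) :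
    (0.24 + s) * (0.24822 * c + 0.96913 * s) < 0.76 * s * (c + 1.32 * s + 0.8712 * s ^ 2) := by
  have hcu : c ≤ 0.98 := by nlinarith
  have hcl : 0.97 ≤ c := by nlinarith
  nlinarith [sq_nonneg (s - 0.2), sq_nonneg (c - 0.975), mul_pos hc0 hc0,
    sq_nonneg (s - 0.22), mul_nonneg (sub_nonneg.2 hs1) (sub_nonneg.2 hcl)]

lemma gN {a c s : ℝ} (hac : a * c = 1.32 * s) (hc1 : c ≤ 1) (hc0 : 0 < c) (ha : 0 ≤ a) :
    c + 1.32 * s + 0.8712 * s ^ 2 ≤ (1 + a + a ^ 2 / 2) * c := by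
  have hsq : (a * c) ^ 2 = (1.32 * s) ^ 2 := by rw [hac]
  have hprod : 0 ≤ a ^ 2 * c * (1 - c) :=
    mul_nonneg (mul_nonneg (sq_nonneg a) hc0.le) (sub_nonneg.2 hc1)
  nlinarith [hsq, hprod, hac]

set_option maxHeartbeats 1000000 in
lemma fDS_key {t : ℝ} (ht1 : π + 1 ≤ t) (ht2 : t ≤ 5) :
    t - 1 - π / 2 < fDS (1 + 0.24 * t) := by
  have hπ := Real.pi_gt_d6
  have hπ2 := Real.pi_lt_d6
  rcases le_or_gt t 4.3 with h0 | h0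
  · have hb := fds_lb (t := t) (r := 862327/500000) (y := 5143/10000) (x2 := 125/254)
        (by norm_num) (by nlinarith [hπ]) (by
          have hle := one_div_le_one_div_of_le (by linarith : (0:ℝ) < 1 + 0.24 * t)
            (by linarith : 1 + 0.24 * t ≤ 2.032)
          calc (125/254:ℝ) = 1/2.032 := by norm_num
            _ ≤ 1/(1+0.24*t) := hle)
        (arcsin_ge (by norm_num) (by norm_num) sinnum0)
    linarith
  · rcases le_or_gt t 4.7 with h1 | h1
    · have hb := fds_lb (t := t) (r := 884451/500000) (y := 489/1000) (x2 := 125/266)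
          (by norm_num) (by nlinarith [h1]) (by
            have hle := one_div_le_one_div_of_le (by linarith : (0:ℝ) < 1 + 0.24 * t)
              (by linarith : 1 + 0.24 * t ≤ 2.128)
            calc (125/266:ℝ) = 1/2.128 := by norm_num
              _ ≤ 1/(1+0.24*t) := hle)
          (arcsin_ge (by norm_num) (by norm_num) sinnum1)
      linarith
    · rcases le_or_gt t 4.9 with h2 | h2
      · have hb := fds_lb (t := t) (r := 1878397/1000000) (y := 4773/10000) (x2 := 125/272)
            (by norm_num) (by nlinarith [h2]) (by
              have hle := one_div_le_one_div_of_le (by linarith : (0:ℝ) < 1 + 0.24 * t)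
                (by linarith : 1 + 0.24 * t ≤ 2.176)
              calc (125/272:ℝ) = 1/2.176 := by norm_num
                _ ≤ 1/(1+0.24*t) := hle)
            (arcsin_ge (by norm_num) (by norm_num) sinnum2)
        linarith
      · rcases le_or_gt t 4.97 with h3 | h3
        · have hb := fds_lb (t := t) (r := 966303/500000) (y := 2367/5000) (x2 := 1250/2741)
              (by norm_num) (by nlinarith [h3]) (by
                have hle := one_div_le_one_div_of_le (by linarith : (0:ℝ) < 1 + 0.24 * t)
                  (by linarith : 1 + 0.24 * t ≤ 2.1928)
                calc (1250/2741:ℝ) = 1/2.1928 := by norm_num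
                  _ ≤ 1/(1+0.24*t) := hle)
              (arcsin_ge (by norm_num) (by norm_num) sinnum3)
          linarith
        · rcases le_or_gt t 4.99 with h4 | h4
          · have hb := fds_lb (t := t) (r := 1951503/1000000) (y := 4723/10000) (x2 := 1250/2747)
                (by norm_num) (by nlinarith [h4]) (by
                  have hle := one_div_le_one_div_of_le (by linarith : (0:ℝ) < 1 + 0.24 * t)
                    (by linarith : 1 + 0.24 * t ≤ 2.1976)
                  calc (1250/2747:ℝ) = 1/2.1976 := by norm_num
                    _ ≤ 1/(1+0.24*t) := hle)
                (arcsin_ge (by norm_num) (by norm_num) sinnum4)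
            linarith
          · rcases le_or_gt t 4.997 with h5 | h5
            · have hb := fds_lb (t := t) (r := 978447/500000) (y := 4719/10000) (x2 := 12500/27491)
                  (by norm_num) (by nlinarith [h5]) (by
                    have hle := one_div_le_one_div_of_le (by linarith : (0:ℝ) < 1 + 0.24 * t)
                      (by linarith : 1 + 0.24 * t ≤ 2.19928)
                    calc (12500/27491:ℝ) = 1/2.19928 := by norm_num
                      _ ≤ 1/(1+0.24*t) := hle)
                  (arcsin_ge (by norm_num) (by norm_num) sinnum5)
              linarith
            · have hb := fds_lb (t := t) (r := 1958781/1000000) (y := 4717/10000) (x2 := 5/11)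
                  (by norm_num) (by nlinarith [h5]) (by
                    have hle := one_div_le_one_div_of_le (by linarith : (0:ℝ) < 1 + 0.24 * t)
                      (by linarith : 1 + 0.24 * t ≤ 2.2)
                    calc (5/11:ℝ) = 1/2.2 := by norm_num
                      _ ≤ 1/(1+0.24*t) := hle)
                  (arcsin_ge (by norm_num) (by norm_num) sinnum6)
              linarith

set_option maxHeartbeats 1000000 in
/-- Let `t ∈ [π + 1, 5]`, `ψ = arcsin(1/t)`, and let
`q ∈ [0, ψ + π/2)` satisfy `(t + 1)/(t + g_ψ(q)) ≥ x(t)`.  Then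
`0.76 < x(t) ≤ (t + 1)/(t + g_ψ(q)) ≤ 1` and `0 ≤ q < 1.32`. -/
theorem xQ_and_q_bounds (t : ℝ) (ht : t ∈ Set.Icc (π + 1) 5)
    (ψ : ℝ) (hψ : ψ = Real.arcsin (1 / t))
    (q : ℝ) (hq : q ∈ Set.Ico 0 (ψ + π / 2))
    (hxq : xFun t ≤ (t + 1) / (t + gFun ψ q)) :
    (0.76 < xFun t ∧ xFun t ≤ (t + 1) / (t + gFun ψ q) ∧
      (t + 1) / (t + gFun ψ q) ≤ 1) ∧
    (0 ≤ q ∧ q < 1.32) := by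
  obtain ⟨ht1, ht2⟩ := ht
  obtain ⟨hq0, hq1⟩ := hq
  have hπ := Real.pi_gt_d6
  have hπ2 := Real.pi_lt_d6
  have ht0 : 0 < t := by linarith
  have hs0 : 0 < 1 / t := by positivity
  have hs1 : 1 / t ≤ 1 := by rw [div_le_one ht0]; linarith
  have hslt1 : 1 / t < 1 := by rw [div_lt_one ht0]; linarith
  have hsl : 0.2 ≤ 1 / t := by rw [le_div_iff₀ ht0]; linarith
  have hsu : 1 / t ≤ 0.2415 := by rw [div_le_iff₀ ht0]; linarith
  have hψpos : 0 < ψ := hψ ▸ (Real.arcsin_pos.2 hs0)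
  have hψlt : ψ < π / 2 := hψ ▸ (Real.arcsin_lt_pi_div_two.2 hslt1)
  have hsinψ : Real.sin ψ = 1 / t := by rw [hψ]; exact Real.sin_arcsin (by linarith) hs1
  have hsψpos : 0 < Real.sin ψ := by rw [hsinψ]; positivity
  have hcosψpos : 0 < Real.cos ψ := Real.cos_pos_of_mem_Ioo ⟨by linarith, hψlt⟩
  have hcosψle1 : Real.cos ψ ≤ 1 := Real.cos_le_one ψ
  have hψub : ψ ≤ 0.245 := by
    rw [hψ]
    apply arcsin_le' (by norm_num) (by norm_num)
    have hb := (sin_poly (x := 0.245) (by norm_num) (by norm_num)).1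
    calc (1:ℝ)/t ≤ 0.2415 := hsu
      _ ≤ Real.sin 0.245 := by norm_num at hb ⊢; linarith
  have hcosqpos : 0 < Real.cos (ψ - q) :=
    Real.cos_pos_of_mem_Ioo ⟨by linarith, by linarith⟩
  have htannn : 0 ≤ Real.tan ψ := by
    rw [Real.tan_eq_sin_div_cos]
    exact div_nonneg hsψpos.le hcosψpos.le
  -- g ≥ 1
  have hsinq : Real.sin q ≤ q := Real.sin_le hq0
  have hcos1 : Real.cos (ψ - q) ≤ Real.cos ψ * Real.exp (q * Real.tan ψ) := by
    have he : Real.cos ψ * (q * Real.tan ψ) = q * Real.sin ψ := by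
      rw [Real.tan_eq_sin_div_cos]; field_simp
    have hexp := Real.add_one_le_exp (q * Real.tan ψ)
    have h2 : Real.cos ψ * (q * Real.tan ψ + 1) ≤ Real.cos ψ * Real.exp (q * Real.tan ψ) :=
      mul_le_mul_of_nonneg_left hexp hcosψpos.le
    have h3 : Real.cos (ψ - q) ≤ Real.cos ψ + q * Real.sin ψ := by
      rw [Real.cos_sub]
      have t1 : Real.cos ψ * Real.cos q ≤ Real.cos ψ * 1 :=
        mul_le_mul_of_nonneg_left (Real.cos_le_one q) hcosψpos.le
      have t2 : Real.sin ψ * Real.sin q ≤ Real.sin ψ * q :=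
        mul_le_mul_of_nonneg_left hsinq hsψpos.le
      linarith
    nlinarith [he, h2, h3]
  have hg1 : 1 ≤ gFun ψ q := by
    unfold gFun
    rw [le_div_iff₀ hcosqpos, one_mul]
    linarith [hcos1]
  have hg0 : 0 < gFun ψ q := lt_of_lt_of_le one_pos hg1
  have htg0 : 0 < t + gFun ψ q := by linarith
  have hQle1 : (t + 1) / (t + gFun ψ q) ≤ 1 := by
    rw [div_le_one htg0]; linarith
  -- the inverse function u
  have hf1 : fDS 1 = π / 2 := by
    unfold fDS
    norm_num [Real.arcsin_one]
  have hf3 : 2.6 ≤ fDS 3 := by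
    unfold fDS
    have h1 : (2.6:ℝ) ≤ Real.sqrt (3 ^ 2 - 1) := sqrt_ge (by norm_num) (by norm_num)
    have h2 : 0 ≤ Real.arcsin (1 / 3) := Real.arcsin_nonneg.2 (by norm_num)
    linarith
  have hcont : ContinuousOn fDS (Set.Icc 1 3) :=
    fDS_contOn.mono (fun x hx => hx.1)
  have hiv := intermediate_value_Icc (by norm_num : (1:ℝ) ≤ 3) hcont
  have hmem : t - 1 - π / 2 ∈ Set.Icc (fDS 1) (fDS 3) := by
    constructor
    · rw [hf1]; linarith
    · linarith
  obtain ⟨a₀, ha₀, hfa₀⟩ := hiv hmem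
  have hex : ∃ b ∈ Set.Ici (1:ℝ), fDS b = t - 1 - π / 2 := ⟨a₀, ha₀.1, hfa₀⟩
  have hu_mem : uFun t ∈ Set.Ici (1:ℝ) := by
    unfold uFun fDSInv
    exact Function.invFunOn_mem hex
  have hfu : fDS (uFun t) = t - 1 - π / 2 := by
    unfold uFun fDSInv
    exact Function.invFunOn_eq hex
  have hkey : t - 1 - π / 2 < fDS (1 + 0.24 * t) := fDS_key ht1 ht2
  have hvmem : (1 + 0.24 * t) ∈ Set.Ici (1:ℝ) := by
    simp only [Set.mem_Ici]
    linarith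
  have hult : uFun t < 1 + 0.24 * t :=
    (fDS_mono.lt_iff_lt hu_mem hvmem).1 (by rw [hfu]; exact hkey)
  have hx76 : 0.76 < xFun t := by
    unfold xFun
    have hlt : (uFun t - 1) / t < 0.24 := by
      rw [div_lt_iff₀ ht0]; linarith
    linarith
  refine ⟨⟨hx76, hxq, hQle1⟩, hq0, ?_⟩
  -- q < 1.32 by contradiction
  by_contra hcon
  push_neg at hcon
  have h76Q : 0.76 < (t + 1) / (t + gFun ψ q) := lt_of_lt_of_le hx76 hxq
  have h76 : 0.76 * (t + gFun ψ q) < t + 1 := by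
    rw [lt_div_iff₀ htg0] at h76Q
    linarith
  have hc2 : Real.cos ψ ^ 2 = 1 - (1 / t) ^ 2 := by
    have hpy := Real.sin_sq_add_cos_sq ψ
    rw [hsinψ] at hpy
    linarith
  have hanng : 0 ≤ 1.32 * Real.tan ψ := mul_nonneg (by norm_num) htannn
  have hac : (1.32 * Real.tan ψ) * Real.cos ψ = 1.32 * (1 / t) := by
    rw [Real.tan_eq_sin_div_cos, hsinψ]
    field_simp
  have hexp1 : Real.exp (1.32 * Real.tan ψ) ≤ Real.exp (q * Real.tan ψ) :=
    Real.exp_le_exp.2 (mul_le_mul_of_nonneg_right hcon htannn)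
  have hquad : 1 + 1.32 * Real.tan ψ + (1.32 * Real.tan ψ) ^ 2 / 2 ≤
      Real.exp (1.32 * Real.tan ψ) := Real.quadratic_le_exp_of_nonneg hanng
  have hco : Real.cos (ψ - q) ≤ Real.cos (ψ - 1.32) := by
    have h1 : Real.cos (ψ - q) = Real.cos (q - ψ) := by
      rw [← Real.cos_neg (ψ - q)]; ring_nf
    have h2 : Real.cos (ψ - 1.32) = Real.cos (1.32 - ψ) := by
      rw [← Real.cos_neg (ψ - 1.32)]; ring_nf
    rw [h1, h2]
    exact Real.cos_le_cos_of_nonneg_of_le_pi (by linarith) (by linarith) (by linarith)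
  have hD : Real.cos (ψ - 1.32) = Real.cos 1.32 * Real.cos ψ + Real.sin 1.32 * (1 / t) := by
    rw [Real.cos_sub, hsinψ]
    ring
  have hDub : Real.cos (ψ - 1.32) ≤ 0.24822 * Real.cos ψ + 0.96913 * (1 / t) := by
    rw [hD]
    have hC : Real.cos 1.32 * Real.cos ψ ≤ 0.24822 * Real.cos ψ :=
      mul_le_mul_of_nonneg_right cos132_ub hcosψpos.le
    have hS : Real.sin 1.32 * (1 / t) ≤ 0.96913 * (1 / t) :=
      mul_le_mul_of_nonneg_right sin132_ub hs0.le
    linarith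
  have hDubpos : 0 < 0.24822 * Real.cos ψ + 0.96913 * (1 / t) := by positivity
  have hglb : (1 + 1.32 * Real.tan ψ + (1.32 * Real.tan ψ) ^ 2 / 2) * Real.cos ψ ≤
      gFun ψ q * Real.cos (ψ - 1.32) := by
    have hnum : (1 + 1.32 * Real.tan ψ + (1.32 * Real.tan ψ) ^ 2 / 2) * Real.cos ψ ≤
        Real.exp (q * Real.tan ψ) * Real.cos ψ :=
      mul_le_mul_of_nonneg_right (hquad.trans hexp1) hcosψpos.le
    have hg : gFun ψ q * Real.cos (ψ - q) = Real.exp (q * Real.tan ψ) * Real.cos ψ := by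
      unfold gFun
      field_simp
    calc (1 + 1.32 * Real.tan ψ + (1.32 * Real.tan ψ) ^ 2 / 2) * Real.cos ψ ≤
        Real.exp (q * Real.tan ψ) * Real.cos ψ := hnum
      _ = gFun ψ q * Real.cos (ψ - q) := hg.symm
      _ ≤ gFun ψ q * Real.cos (ψ - 1.32) := mul_le_mul_of_nonneg_left hco hg0.le
  have hN : Real.cos ψ + 1.32 * (1 / t) + 0.8712 * (1 / t) ^ 2 ≤
      (1 + 1.32 * Real.tan ψ + (1.32 * Real.tan ψ) ^ 2 / 2) * Real.cos ψ :=
    gN hac hcosψle1 hcosψpos hanng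
  have hgd : Real.cos ψ + 1.32 * (1 / t) + 0.8712 * (1 / t) ^ 2 ≤
      gFun ψ q * (0.24822 * Real.cos ψ + 0.96913 * (1 / t)) :=
    hN.trans (hglb.trans (mul_le_mul_of_nonneg_left hDub hg0.le))
  have hP := polyIneq hsl hsu hc2 hcosψpos
  have hts : t * (1 / t) = 1 := by field_simp
  have h1 : 0.76 * (1 / t) * (Real.cos ψ + 1.32 * (1 / t) + 0.8712 * (1 / t) ^ 2) ≤
      0.76 * (1 / t) * (gFun ψ q * (0.24822 * Real.cos ψ + 0.96913 * (1 / t))) :=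
    mul_le_mul_of_nonneg_left hgd (by positivity)
  have h2 : (0.24 + 1 / t) * (0.24822 * Real.cos ψ + 0.96913 * (1 / t)) <
      0.76 * (1 / t) * gFun ψ q * (0.24822 * Real.cos ψ + 0.96913 * (1 / t)) := by
    have h2' := hP.trans_le h1
    linarith [h2']
  have h3 : 0.24 + 1 / t < 0.76 * (1 / t) * gFun ψ q :=
    lt_of_mul_lt_mul_right h2 hDubpos.le
  have h4 := mul_lt_mul_of_pos_right h76 hs0
  linarith [h3, h4, hts]
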